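/- For every integer ℓ ≥ 0, the ideal M·Qℓ of R is minimally generated by C(m+ℓ, ℓ+1)·n elements; that is, μ_R(M·Q^ℓ) = C(m+ℓ, ℓ+1)·n. -/

import Mathlib

set_option synthInstance.maxHeartbeats 1000000
set_option maxHeartbeats 4000000

noncomputable section

open MvPolynomial

/-- The minimal number of generators of an ideal `I`, i.e. the least cardinality of a
finite generating set of `I`. -/
def idealMu {A : Type*} [CommRing A] (I : Ideal A) : ℕ :=
  sInf {c : ℕ | ∃ s : Finset A, s.card = c ∧ Ideal.span (s : Set A) = I}

variable (k : Type*) [Field k] (m n : ℕ)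

/-- The ideal `I₂(X)` of `2 × 2` minors of the generic `m × n` matrix
`X = (X_{ij})` in the polynomial ring `S = k[X_{ij}]`. -/
def detIdeal : Ideal (MvPolynomial (Fin m × Fin n) k) :=
  Ideal.span {f | ∃ (i₁ i₂ : Fin m) (j₁ j₂ : Fin n), i₁ < i₂ ∧ j₁ < j₂ ∧
    f = X (i₁, j₁) * X (i₂, j₂) - X (i₁, j₂) * X (i₂, j₁)}

/-- The determinantal ring `R = S/I₂(X)`. -/
abbrev DetRing := MvPolynomial (Fin m × Fin n) k ⧸ detIdeal k m n

/-- `x_{ij}`, the image of `X_{ij}` in `R`. -/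
def xbar (i : Fin m) (j : Fin n) : DetRing k m n :=
  Ideal.Quotient.mk _ (X (i, j))

/-- The graded maximal ideal `M = R₊`, generated by all the `x_{ij}`. -/
def maxIdeal : Ideal (DetRing k m n) :=
  Ideal.span (Set.range fun p : Fin m × Fin n => xbar k m n p.1 p.2)

/-- The ideal `Q = (x_{11}, x_{21}, …, x_{m1})` generated by the entries of the
first column of `X`. -/
def colIdeal : Ideal (DetRing k m n) :=
  Ideal.span {y | ∃ (i : Fin m) (j : Fin n), (j : ℕ) = 0 ∧ y = xbar k m n i j}

/-! ### Auxiliary development -/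

open Pointwise

/-- The Segre-type algebra map `S → k[U, V]`, `X_{ij} ↦ U_i V_j`. -/
def segre : MvPolynomial (Fin m × Fin n) k →ₐ[k] MvPolynomial (Fin m ⊕ Fin n) k :=
  aeval fun p => X (Sum.inl p.1) * X (Sum.inr p.2)

lemma segre_ker : detIdeal k m n ≤ RingHom.ker (segre k m n) := by
  rw [detIdeal, Ideal.span_le]
  rintro f ⟨i₁, i₂, j₁, j₂, h₁, h₂, rfl⟩
  simp only [SetLike.mem_coe, RingHom.mem_ker, map_sub, map_mul, segre, aeval_X]
  ring

/-- The induced map `ψ : R → k[U, V]`. -/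
def psi : DetRing k m n →ₐ[k] MvPolynomial (Fin m ⊕ Fin n) k :=
  Ideal.Quotient.liftₐ _ (segre k m n) (fun _ ha => segre_ker k m n ha)

lemma psi_mk (f : MvPolynomial (Fin m × Fin n) k) :
    psi k m n (Ideal.Quotient.mk _ f) = segre k m n f := by
  simp [psi, Ideal.Quotient.liftₐ_apply, Ideal.Quotient.lift_mk]
  rfl

lemma psi_xbar (i : Fin m) (j : Fin n) :
    psi k m n (xbar k m n i j) =
      monomial (Finsupp.single (Sum.inl i) 1 + Finsupp.single (Sum.inr j) 1) 1 := by
  rw [xbar, psi_mk]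
  simp only [segre, aeval_X]
  rw [X, X, monomial_mul, one_mul]

/-- Total degree of an exponent vector, as an additive monoid hom. -/
def degHom : ((Fin m ⊕ Fin n) →₀ ℕ) →+ ℕ := Finsupp.weight (fun _ => (1:ℕ))

lemma degHom_single (x : Fin m ⊕ Fin n) (c : ℕ) : degHom m n (Finsupp.single x c) = c := by
  simp [degHom, Finsupp.weight_apply, Finsupp.sum_single_index]

lemma degHom_eq_zero {f : (Fin m ⊕ Fin n) →₀ ℕ} (h : degHom m n f = 0) : f = 0 := by
  rw [← Finsupp.degree_eq_zero_iff f, Finsupp.degree_eq_weight_one]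
  exact h

/-- The basic commuting relation coming from the `2 × 2` minors. -/
lemma xbar_swap (i i' : Fin m) (j j' : Fin n) :
    xbar k m n i j * xbar k m n i' j' = xbar k m n i j' * xbar k m n i' j := by
  have minor : ∀ (a b : Fin m) (c d : Fin n), a < b → c < d →
      xbar k m n a c * xbar k m n b d = xbar k m n a d * xbar k m n b c := by
    intro a b c d hab hcd
    have hmem : (X (a, c) * X (b, d) - X (a, d) * X (b, c) :
        MvPolynomial (Fin m × Fin n) k) ∈ detIdeal k m n :=
      Ideal.subset_span ⟨a, b, c, d, hab, hcd, rfl⟩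
    have h0 := Ideal.Quotient.eq_zero_iff_mem.mpr hmem
    rw [map_sub, map_mul, map_mul, sub_eq_zero] at h0
    exact h0
  rcases lt_trichotomy i i' with hi | hi | hi
  · rcases lt_trichotomy j j' with hj | hj | hj
    · exact minor i i' j j' hi hj
    · subst hj; rfl
    · linear_combination -(minor i i' j' j hi hj)
  · subst hi; exact mul_comm _ _
  · rcases lt_trichotomy j j' with hj | hj | hj
    · linear_combination -(minor i' i j j' hi hj)
    · subst hj; rfl
    · linear_combination minor i' i j' j hi hj

/-- Product of first-column variables indexed by a multiset. -/
def colProd (j₀ : Fin n) (s : Multiset (Fin m)) : DetRing k m n :=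
  (s.map fun c => xbar k m n c j₀).prod

lemma colProd_zero (j₀ : Fin n) : colProd k m n j₀ 0 = 1 := rfl

lemma colProd_cons (j₀ : Fin n) (a : Fin m) (s : Multiset (Fin m)) :
    colProd k m n j₀ (a ::ₘ s) = xbar k m n a j₀ * colProd k m n j₀ s := by
  simp [colProd]

/-- The key invariance: `x_{i j} ∏_{c ∈ s} x_{c j₀}` only depends on the multiset
`{i} + s` (and on `j`). -/
lemma mul_colProd_invariant (j₀ j : Fin n) (i i' : Fin m) (s s' : Multiset (Fin m))
    (h : i ::ₘ s = i' ::ₘ s') :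
    xbar k m n i j * colProd k m n j₀ s = xbar k m n i' j * colProd k m n j₀ s' := by
  by_cases hii : i = i'
  · subst hii
    rw [(Multiset.cons_inj_right i).mp h]
  · have hi' : i' ∈ s := by
      have h1 : i' ∈ i ::ₘ s := by rw [h]; exact Multiset.mem_cons_self i' s'
      rcases Multiset.mem_cons.mp h1 with h2 | h2
      · exact absurd h2.symm hii
      · exact h2
    have hs : s = i' ::ₘ s.erase i' := (Multiset.cons_erase hi').symm
    have hs' : s' = i ::ₘ s.erase i' := by
      have h2 : i' ::ₘ s' = i' ::ₘ i ::ₘ s.erase i' := by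
        rw [← h]
        conv_lhs => rw [hs]
        exact Multiset.cons_swap i i' _
      exact (Multiset.cons_inj_right i').mp h2
    rw [hs, hs', colProd_cons, colProd_cons, ← mul_assoc, ← mul_assoc,
      xbar_swap k m n i i' j j₀, mul_comm (xbar k m n i j₀) (xbar k m n i' j)]

lemma psi_colProd (j₀ : Fin n) (s : Multiset (Fin m)) :
    psi k m n (colProd k m n j₀ s) =
      monomial ((s.map fun c => Finsupp.single (Sum.inl c : Fin m ⊕ Fin n) 1).sum
        + Multiset.card s • Finsupp.single (Sum.inr j₀) 1) 1 := by
  induction s using Multiset.induction with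
  | empty => simp [colProd_zero]
  | cons a s ih =>
    rw [colProd_cons, map_mul, psi_xbar, ih, monomial_mul, one_mul]
    congr 1
    rw [Multiset.map_cons, Multiset.sum_cons, Multiset.card_cons, add_nsmul, one_nsmul]
    abel

lemma psi_mul_colProd (j₀ j : Fin n) (i : Fin m) (s : Multiset (Fin m)) :
    psi k m n (xbar k m n i j * colProd k m n j₀ s) =
      monomial (((i ::ₘ s).map fun c => Finsupp.single (Sum.inl c : Fin m ⊕ Fin n) 1).sum
        + Finsupp.single (Sum.inr j) 1
        + Multiset.card s • Finsupp.single (Sum.inr j₀) 1) 1 := by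
  rw [map_mul, psi_xbar, psi_colProd, monomial_mul, one_mul]
  congr 1
  rw [Multiset.map_cons, Multiset.sum_cons]
  abel

lemma degHom_multiset_sum (s : Multiset (Fin m)) :
    degHom m n (s.map fun c => Finsupp.single (Sum.inl c : Fin m ⊕ Fin n) 1).sum
      = Multiset.card s := by
  induction s using Multiset.induction with
  | empty => simp
  | cons a s ih =>
    rw [Multiset.map_cons, Multiset.sum_cons, map_add, degHom_single, ih,
      Multiset.card_cons]
    omega

lemma multiset_sum_apply_inl (s : Multiset (Fin m)) (c : Fin m) :
    ((s.map fun c' => Finsupp.single (Sum.inl c' : Fin m ⊕ Fin n) 1).sum) (Sum.inl c)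
      = s.count c := by
  induction s using Multiset.induction with
  | empty => simp
  | cons a s ih =>
    rw [Multiset.map_cons, Multiset.sum_cons, Finsupp.add_apply, ih, Multiset.count_cons]
    by_cases hac : a = c
    · subst hac; simp; omega
    · rw [Finsupp.single_apply, if_neg (by simpa using hac),
        if_neg (fun hca => hac hca.symm)]
      omega

lemma multiset_sum_apply_inr (s : Multiset (Fin m)) (j : Fin n) :
    ((s.map fun c' => Finsupp.single (Sum.inl c' : Fin m ⊕ Fin n) 1).sum) (Sum.inr j)
      = 0 := by
  induction s using Multiset.induction with
  | empty => simp
  | cons a s ih =>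
    rw [Multiset.map_cons, Multiset.sum_cons, Finsupp.add_apply, ih,
      Finsupp.single_apply, if_neg (by simp)]

/-- The exponent vector `u^σ v_j v_{j₀}^ℓ`. -/
def expE (j₀ : Fin n) (ℓ : ℕ) (p : Sym (Fin m) (ℓ + 1) × Fin n) : (Fin m ⊕ Fin n) →₀ ℕ :=
  ((p.1 : Multiset (Fin m)).map fun c => Finsupp.single (Sum.inl c : Fin m ⊕ Fin n) 1).sum
    + Finsupp.single (Sum.inr p.2) 1 + ℓ • Finsupp.single (Sum.inr j₀) 1

lemma degHom_expE (j₀ : Fin n) (ℓ : ℕ) (p : Sym (Fin m) (ℓ + 1) × Fin n) :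
    degHom m n (expE m n j₀ ℓ p) = 2 * ℓ + 2 := by
  rw [expE, map_add, map_add, map_nsmul, degHom_single, degHom_single,
    degHom_multiset_sum]
  have : Multiset.card (p.1 : Multiset (Fin m)) = ℓ + 1 := p.1.2
  rw [this]
  simp only [smul_eq_mul, mul_one]
  omega

lemma expE_injective (j₀ : Fin n) (ℓ : ℕ) : Function.Injective (expE m n j₀ ℓ) := by
  rintro ⟨σ, j⟩ ⟨σ', j'⟩ h
  have hσ : (σ : Multiset (Fin m)) = (σ' : Multiset (Fin m)) := by
    ext c
    have hc := congrArg (fun f => f (Sum.inl c)) h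
    simpa [expE, Finsupp.add_apply, Finsupp.smul_apply, multiset_sum_apply_inl,
      Finsupp.single_apply] using hc
  have hj : j = j'  := by
    have hc := congrArg (fun f => f (Sum.inr j)) h
    simp only [expE, Finsupp.add_apply, Finsupp.smul_apply, multiset_sum_apply_inr,
      Finsupp.single_apply, hσ, if_true] at hc
    by_cases hc' : (Sum.inr j' : Fin m ⊕ Fin n) = Sum.inr j
    · exact (Sum.inr.inj hc').symm
    · rw [if_neg hc'] at hc
      simp only [smul_eq_mul] at hc
      omega
  exact Prod.ext (Sym.coe_injective hσ) hj

/-- Auxiliary: decomposition of a nonempty symmetric power. -/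
lemma sym_exists_cons (ℓ : ℕ) (σ : Sym (Fin m) (ℓ + 1)) :
    ∃ (i : Fin m) (s : Multiset (Fin m)), (σ : Multiset (Fin m)) = i ::ₘ s := by
  have hcard : Multiset.card (σ : Multiset (Fin m)) = ℓ + 1 := σ.2
  have hne : (σ : Multiset (Fin m)) ≠ 0 := by
    intro h0
    rw [h0] at hcard
    simp at hcard
  obtain ⟨a, ha⟩ := Multiset.exists_mem_of_ne_zero hne
  obtain ⟨t, ht⟩ := Multiset.exists_cons_of_mem ha
  exact ⟨a, t, ht⟩

/-- A canonical representative `x_{i j} ∏_{c ∈ s} x_{c j₀}` for each pair `(σ, j)`. -/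
def hFun (j₀ : Fin n) (ℓ : ℕ) (p : Sym (Fin m) (ℓ + 1) × Fin n) : DetRing k m n :=
  xbar k m n (sym_exists_cons m ℓ p.1).choose p.2 *
    colProd k m n j₀ (sym_exists_cons m ℓ p.1).choose_spec.choose

lemma hFun_eq (j₀ : Fin n) (ℓ : ℕ) (σ : Sym (Fin m) (ℓ + 1)) (j : Fin n) (i : Fin m)
    (s : Multiset (Fin m)) (h : (σ : Multiset (Fin m)) = i ::ₘ s) :
    hFun k m n j₀ ℓ (σ, j) = xbar k m n i j * colProd k m n j₀ s := by
  apply mul_colProd_invariant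
  rw [← (sym_exists_cons m ℓ σ).choose_spec.choose_spec, h]
lemma psi_hFun (j₀ : Fin n) (ℓ : ℕ) (σ : Sym (Fin m) (ℓ + 1)) (j : Fin n) :
    psi k m n (hFun k m n j₀ ℓ (σ, j)) = monomial (expE m n j₀ ℓ (σ, j)) 1 := by
  obtain ⟨i, s, hdec⟩ := sym_exists_cons m ℓ σ
  rw [hFun_eq k m n j₀ ℓ σ j i s hdec, psi_mul_colProd]
  congr 1
  have hcard : Multiset.card s = ℓ := by
    have hc : Multiset.card (σ : Multiset (Fin m)) = ℓ + 1 := σ.2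
    rw [hdec, Multiset.card_cons] at hc
    omega
  simp only [expE]
  rw [hdec, hcard]

lemma colProd_univ_map (j₀ : Fin n) (ℓ : ℕ) (a : Fin ℓ → Fin m) :
    colProd k m n j₀ (Multiset.map a Finset.univ.val) = ∏ t, xbar k m n (a t) j₀ := by
  rw [colProd, Multiset.map_map, Finset.prod_eq_multiset_prod]
  rfl

lemma colProd_mem_pow (j₀ : Fin n) (hj₀ : (j₀ : ℕ) = 0) (s : Multiset (Fin m)) :
    colProd k m n j₀ s ∈ colIdeal k m n ^ (Multiset.card s) := by
  induction s using Multiset.induction with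
  | empty => simp [colProd_zero, Ideal.one_eq_top]
  | cons a s ih =>
    rw [colProd_cons, Multiset.card_cons, Submodule.pow_succ, mul_comm (colIdeal k m n ^ Multiset.card s)]
    exact Ideal.mul_mem_mul (Ideal.subset_span ⟨a, j₀, hj₀, rfl⟩) ih

lemma colIdeal_span (j₀ : Fin n) (hj₀ : (j₀ : ℕ) = 0) :
    colIdeal k m n = Ideal.span (Set.range fun i => xbar k m n i j₀) := by
  rw [colIdeal]
  congr 1
  ext y
  constructor
  · rintro ⟨i, j, hj, rfl⟩
    exact ⟨i, by rw [show j₀ = j from Fin.ext (by omega)]⟩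
  · rintro ⟨i, rfl⟩
    exact ⟨i, j₀, hj₀, rfl⟩

lemma span_pow_set (B : Set (DetRing k m n)) (t : ℕ) :
    Ideal.span B ^ t = Ideal.span (B ^ t) := by
  induction t with
  | zero =>
    rw [Submodule.pow_zero, pow_zero, Ideal.one_eq_top]
    exact (Ideal.span_singleton_one).symm
  | succ t ih => rw [pow_succ, Submodule.pow_succ, ih, Ideal.span_mul_span']

/-- The ideal of elements of `R` whose image under `ψ` is supported in degrees `≥ D`. -/
def Wdeg (D : ℕ) : Ideal (DetRing k m n) where
  carrier := {r | ∀ e, coeff e (psi k m n r) ≠ 0 → D ≤ degHom m n e}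
  zero_mem' := by
    intro e he
    rw [map_zero, coeff_zero] at he
    exact absurd rfl he
  add_mem' := by
    intro a b ha hb e he
    rw [map_add, coeff_add] at he
    have : coeff e (psi k m n a) ≠ 0 ∨ coeff e (psi k m n b) ≠ 0 := by
      by_contra hh
      push_neg at hh
      rw [hh.1, hh.2, add_zero] at he
      exact he rfl
    rcases this with h | h
    · exact ha e h
    · exact hb e h
  smul_mem' := by
    classical
    intro r t ht e he
    rw [smul_eq_mul, map_mul, coeff_mul] at he
    obtain ⟨x, hx, hne⟩ := Finset.exists_ne_zero_of_sum_ne_zero he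
    have h2 : coeff x.2 (psi k m n t) ≠ 0 := fun h0 => hne (by rw [h0, mul_zero])
    have hD := ht x.2 h2
    have hsum : x.1 + x.2 = e := Finset.HasAntidiagonal.mem_antidiagonal.mp hx
    have hdeg : degHom m n x.1 + degHom m n x.2 = degHom m n e := by
      rw [← map_add, hsum]
    omega

lemma coeff_mul_collapse (D : ℕ) (r t : DetRing k m n) (ht : t ∈ Wdeg k m n D)
    (e : (Fin m ⊕ Fin n) →₀ ℕ) (he : degHom m n e = D) :
    coeff e (psi k m n (r * t)) = coeff 0 (psi k m n r) * coeff e (psi k m n t) := by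
  classical
  rw [map_mul, coeff_mul]
  apply Finset.sum_eq_single ((0 : (Fin m ⊕ Fin n) →₀ ℕ), e)
  · rintro ⟨e₁, e₂⟩ hmem hne
    by_cases h2 : coeff e₂ (psi k m n t) = 0
    · rw [h2, mul_zero]
    · have hD := ht e₂ h2
      have hsum : e₁ + e₂ = e := Finset.HasAntidiagonal.mem_antidiagonal.mp hmem
      have hdeg : degHom m n e₁ + degHom m n e₂ = D := by rw [← map_add, hsum, he]
      have h0 : e₁ = 0 := degHom_eq_zero m n (by omega)
      refine absurd ?_ hne
      have h3 : e₂ = e := by rw [h0, zero_add] at hsum; exact hsum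
      rw [h0, h3]
  · intro hnm
    exact absurd (Finset.HasAntidiagonal.mem_antidiagonal.mpr (zero_add e)) hnm
/-- The generators `x_{i j} · x_{a₁ j₀} ⋯ x_{a_ℓ j₀}` of `M · Q^ℓ`. -/
def gElem (j₀ : Fin n) (ℓ : ℕ) (p : (Fin m × Fin n) × (Fin ℓ → Fin m)) : DetRing k m n :=
  xbar k m n p.1.1 p.1.2 * ∏ t, xbar k m n (p.2 t) j₀

lemma gElem_eq_colProd (j₀ : Fin n) (ℓ : ℕ) (p : (Fin m × Fin n) × (Fin ℓ → Fin m)) :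
    gElem k m n j₀ ℓ p =
      xbar k m n p.1.1 p.1.2 * colProd k m n j₀ (Multiset.map p.2 Finset.univ.val) := by
  rw [gElem, colProd_univ_map]

lemma span_gElem (j₀ : Fin n) (hj₀ : (j₀ : ℕ) = 0) (ℓ : ℕ) :
    Ideal.span (Set.range (gElem k m n j₀ ℓ)) = maxIdeal k m n * colIdeal k m n ^ ℓ := by
  rw [maxIdeal, colIdeal_span k m n j₀ hj₀, span_pow_set, Ideal.span_mul_span']
  congr 1
  ext r
  constructor
  · rintro ⟨p, rfl⟩
    rw [gElem]
    refine Set.mul_mem_mul ⟨p.1, rfl⟩ (Set.mem_pow.mpr ?_)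
    exact ⟨fun t => ⟨xbar k m n (p.2 t) j₀, ⟨p.2 t, rfl⟩⟩, by rw [List.prod_ofFn]⟩
  · rintro ⟨a, ⟨pp, rfl⟩, b, hb, rfl⟩
    obtain ⟨f, hf⟩ := Set.mem_pow.mp hb
    choose a' ha' using fun t => (f t).2
    refine ⟨(pp, a'), ?_⟩
    rw [gElem]
    congr 1
    rw [← hf, List.prod_ofFn]
    exact Finset.prod_congr rfl fun t _ => ha' t

lemma psi_gElem (j₀ : Fin n) (ℓ : ℕ) (p : (Fin m × Fin n) × (Fin ℓ → Fin m)) :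
    ∃ ep, psi k m n (gElem k m n j₀ ℓ p) = monomial ep 1 ∧ degHom m n ep = 2 * ℓ + 2 := by
  rw [gElem_eq_colProd, psi_mul_colProd]
  refine ⟨_, rfl, ?_⟩
  rw [map_add, map_add, map_nsmul, degHom_single, degHom_single, degHom_multiset_sum,
    Multiset.card_cons, Multiset.card_map]
  have huniv : Multiset.card (Finset.univ : Finset (Fin ℓ)).val = ℓ := by simp
  rw [huniv]
  simp only [smul_eq_mul, mul_one]
  omega

lemma mulPow_le_Wdeg (j₀ : Fin n) (hj₀ : (j₀ : ℕ) = 0) (ℓ : ℕ) :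
    maxIdeal k m n * colIdeal k m n ^ ℓ ≤ Wdeg k m n (2 * ℓ + 2) := by
  classical
  rw [← span_gElem k m n j₀ hj₀ ℓ, Ideal.span_le]
  rintro x ⟨p, rfl⟩
  obtain ⟨ep, hpsi, hdeg⟩ := psi_gElem k m n j₀ ℓ p
  intro e he
  rw [hpsi, coeff_monomial] at he
  by_cases hee : ep = e
  · subst hee; omega
  · rw [if_neg hee] at he; exact absurd rfl he

lemma hFun_mem (j₀ : Fin n) (hj₀ : (j₀ : ℕ) = 0) (ℓ : ℕ) (idx : Sym (Fin m) (ℓ + 1) × Fin n) :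
    hFun k m n j₀ ℓ idx ∈ maxIdeal k m n * colIdeal k m n ^ ℓ := by
  obtain ⟨σ, j⟩ := idx
  obtain ⟨i, s, hdec⟩ := sym_exists_cons m ℓ σ
  rw [hFun_eq k m n j₀ ℓ σ j i s hdec]
  have hcard : Multiset.card s = ℓ := by
    have hc : Multiset.card (σ : Multiset (Fin m)) = ℓ + 1 := σ.2
    rw [hdec, Multiset.card_cons] at hc
    omega
  refine Ideal.mul_mem_mul (Ideal.subset_span ⟨(i, j), rfl⟩) ?_
  exact hcard ▸ colProd_mem_pow k m n j₀ hj₀ s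

/-- The linear "coefficient extraction" map used for the lower bound. -/
def Phi (j₀ : Fin n) (ℓ : ℕ) (r : DetRing k m n) : (Sym (Fin m) (ℓ + 1) × Fin n) → k :=
  fun idx => coeff (expE m n j₀ ℓ idx) (psi k m n r)

lemma Phi_hFun (j₀ : Fin n) (ℓ : ℕ) (idx : Sym (Fin m) (ℓ + 1) × Fin n) :
    Phi k m n j₀ ℓ (hFun k m n j₀ ℓ idx) = Pi.single idx 1 := by
  classical
  funext idx'
  rw [Phi, show idx = (idx.1, idx.2) from rfl, psi_hFun, coeff_monomial]
  by_cases hee : (idx.1, idx.2) = idx'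
  · rw [if_pos (by rw [hee]), hee, Pi.single_eq_same]
  · rw [if_neg (fun h => hee (expE_injective m n j₀ ℓ h)),
      Pi.single_eq_of_ne (fun h => hee (by rw [h])) ]

lemma card_sym_prod (ℓ : ℕ) :
    Fintype.card (Sym (Fin m) (ℓ + 1) × Fin n) = Nat.choose (m + ℓ) (ℓ + 1) * n := by
  rw [Fintype.card_prod, Sym.card_sym_eq_choose, Fintype.card_fin, Fintype.card_fin,
    show m + (ℓ + 1) - 1 = m + ℓ from by omega]
/-- **Lemma 3.3.** For `t = 2` and every `ℓ ≥ 0`, `μ_R(M·Q^ℓ) = C(m+ℓ, ℓ+1)·n`. -/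
theorem stmt_2 [Infinite k] (hm : 2 ≤ m) (hmn : m ≤ n) (ℓ : ℕ) :
    idealMu (maxIdeal k m n * colIdeal k m n ^ ℓ) = Nat.choose (m + ℓ) (ℓ + 1) * n := by
  classical
  have hn : 0 < n := by omega
  set j₀ : Fin n := ⟨0, hn⟩ with hj₀def
  have hj₀ : (j₀ : ℕ) = 0 := rfl
  set I := maxIdeal k m n * colIdeal k m n ^ ℓ with hI
  set genSet : Finset (DetRing k m n) :=
    Finset.image (gElem k m n j₀ ℓ) Finset.univ with hgenSet
  have hspanGen : Ideal.span (↑genSet : Set (DetRing k m n)) = I := by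
    rw [hgenSet, Finset.coe_image, Finset.coe_univ, Set.image_univ, hI]
    exact span_gElem k m n j₀ hj₀ ℓ
  -- Lower bound: every finite generating set has at least `C(m+ℓ, ℓ+1)·n` elements.
  have hlower : ∀ s : Finset (DetRing k m n),
      Ideal.span (↑s : Set (DetRing k m n)) = I →
      Nat.choose (m + ℓ) (ℓ + 1) * n ≤ s.card := by
    intro s hs
    have hsI : Ideal.span (↑s : Set (DetRing k m n)) =
        maxIdeal k m n * colIdeal k m n ^ ℓ := hs.trans hI
    have hkey : ∀ t, t ∈ Ideal.span (↑s : Set (DetRing k m n)) →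
        Phi k m n j₀ ℓ t ∈ Submodule.span k (Phi k m n j₀ ℓ '' ↑s) := by
      intro t ht
      induction ht using Submodule.span_induction with
      | mem x hx => exact Submodule.subset_span ⟨x, hx, rfl⟩
      | zero =>
        have h0 : Phi k m n j₀ ℓ 0 = 0 := funext fun idx => by
          rw [Phi, map_zero, coeff_zero]; rfl
        rw [h0]; exact Submodule.zero_mem _
      | add x y hx hy ihx ihy =>
        have hadd : Phi k m n j₀ ℓ (x + y) = Phi k m n j₀ ℓ x + Phi k m n j₀ ℓ y :=
          funext fun idx => by rw [Phi, map_add, coeff_add]; rfl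
        rw [hadd]; exact Submodule.add_mem _ ihx ihy
      | smul r x hx ih =>
        have hxW : x ∈ Wdeg k m n (2 * ℓ + 2) :=
          mulPow_le_Wdeg k m n j₀ hj₀ ℓ (hsI ▸ hx)
        have hsmul : Phi k m n j₀ ℓ (r • x) =
            coeff 0 (psi k m n r) • Phi k m n j₀ ℓ x := by
          funext idx
          show coeff _ (psi k m n (r * x)) = _
          rw [coeff_mul_collapse k m n (2 * ℓ + 2) r x hxW _ (degHom_expE m n j₀ ℓ idx)]
          rfl
        rw [hsmul]; exact Submodule.smul_mem _ _ ih
    have hbasis : ∀ idx : Sym (Fin m) (ℓ + 1) × Fin n,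
        Pi.single idx (1 : k) ∈ Submodule.span k (Phi k m n j₀ ℓ '' ↑s) := by
      intro idx
      rw [← Phi_hFun k m n j₀ ℓ idx]
      exact hkey _ (by rw [hsI]; exact hFun_mem k m n j₀ hj₀ ℓ idx)
    have hspan_top : Submodule.span k (Phi k m n j₀ ℓ '' ↑s) = ⊤ := by
      rw [eq_top_iff, ← (Pi.basisFun k (Sym (Fin m) (ℓ + 1) × Fin n)).span_eq]
      refine Submodule.span_le.mpr ?_
      rintro _ ⟨idx, rfl⟩
      rw [Pi.basisFun_apply]
      exact hbasis idx
    have h2 : Submodule.span k (↑(s.image (Phi k m n j₀ ℓ)) :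
        Set ((Sym (Fin m) (ℓ + 1) × Fin n) → k)) = ⊤ := by
      rw [Finset.coe_image]; exact hspan_top
    have hchain : Fintype.card (Sym (Fin m) (ℓ + 1) × Fin n) ≤ s.card := by
      calc Fintype.card (Sym (Fin m) (ℓ + 1) × Fin n)
          = Module.finrank k ((Sym (Fin m) (ℓ + 1) × Fin n) → k) :=
            (Module.finrank_pi k).symm
        _ = Module.finrank k (⊤ : Submodule k ((Sym (Fin m) (ℓ + 1) × Fin n) → k)) :=
            (finrank_top k _).symm
        _ = Module.finrank k (Submodule.span k (↑(s.image (Phi k m n j₀ ℓ)) :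
              Set ((Sym (Fin m) (ℓ + 1) × Fin n) → k))) := by rw [h2]
        _ ≤ (s.image (Phi k m n j₀ ℓ)).card := finrank_span_finset_le_card _
        _ ≤ s.card := Finset.card_image_le
    rw [← card_sym_prod m n ℓ]
    exact hchain
  -- Upper bound: `genSet` has at most `C(m+ℓ, ℓ+1)·n` elements.
  have hcardGen : genSet.card ≤ Nat.choose (m + ℓ) (ℓ + 1) * n := by
    have hsub : genSet ⊆ Finset.image (hFun k m n j₀ ℓ) Finset.univ := by
      intro x hx
      rw [hgenSet, Finset.mem_image] at hx
      rw [Finset.mem_image]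
      obtain ⟨p, -, rfl⟩ := hx
      have hcard : Multiset.card (p.1.1 ::ₘ Multiset.map p.2 Finset.univ.val) = ℓ + 1 := by
        rw [Multiset.card_cons, Multiset.card_map]; simp
      refine ⟨(⟨p.1.1 ::ₘ Multiset.map p.2 Finset.univ.val, hcard⟩, p.1.2),
        Finset.mem_univ _, ?_⟩
      have heq := hFun_eq k m n j₀ ℓ
        (⟨p.1.1 ::ₘ Multiset.map p.2 Finset.univ.val, hcard⟩ : Sym (Fin m) (ℓ + 1))
        p.1.2 p.1.1 (Multiset.map p.2 Finset.univ.val) rfl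
      rw [heq, ← gElem_eq_colProd]
    calc genSet.card
        ≤ (Finset.image (hFun k m n j₀ ℓ) Finset.univ).card := Finset.card_le_card hsub
      _ ≤ (Finset.univ : Finset (Sym (Fin m) (ℓ + 1) × Fin n)).card :=
          Finset.card_image_le
      _ = Nat.choose (m + ℓ) (ℓ + 1) * n := by
          rw [Finset.card_univ, card_sym_prod m n ℓ]
  -- Conclusion.
  rw [idealMu]
  apply le_antisymm
  · exact le_trans (Nat.sInf_le ⟨genSet, rfl, hspanGen⟩) hcardGen
  · refine le_csInf ⟨genSet.card, genSet, rfl, hspanGen⟩ ?_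
    rintro c ⟨s, rfl, hs⟩
    exact hlower s hs
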